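/- Let h, h' be nonzero quaternions such that the real part of h'·u·h vanishes for every purely imaginary quaternion u. Then h' = λ·h⁻¹ for some nonzero real number λ. -/

import Mathlib

open scoped Quaternion

/-- If `h, h'` are nonzero quaternions such that `Re (h' * u * h) = 0`
for every purely imaginary quaternion `u`, then `h' = λ • h⁻¹` for some nonzero real `λ`. -/
theorem quaternion_re_mul_vanishing_imp_inverse_proportional
    (h h' : ℍ[ℝ]) (hh : h ≠ 0) (hh' : h' ≠ 0)
    (H : ∀ u : ℍ[ℝ], u.re = 0 → (h' * u * h).re = 0) :
    ∃ l : ℝ, l ≠ 0 ∧ h' = l • h⁻¹ := by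
  have h1 := H ((Quaternion.equivTuple ℝ).symm ![0,1,0,0]) rfl
  have h2 := H ((Quaternion.equivTuple ℝ).symm ![0,0,1,0]) rfl
  have h3 := H ((Quaternion.equivTuple ℝ).symm ![0,0,0,1]) rfl
  simp only [Quaternion.re_mul, Quaternion.imI_mul, Quaternion.imJ_mul, Quaternion.imK_mul] at h1 h2 h3
  simp [Quaternion.re_mul, Quaternion.imI_mul, Quaternion.imJ_mul, Quaternion.imK_mul] at h1 h2 h3
  have key : h * h' = ((h * h').re : ℍ[ℝ]) := by
    ext <;>
      simp [Quaternion.re_mul, Quaternion.imI_mul, Quaternion.imJ_mul, Quaternion.imK_mul] <;>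
      linarith
  have hne : (h * h').re ≠ 0 := by
    intro h0
    apply hh'
    have : h * h' = 0 := by rw [key, h0]; simp
    have := mul_eq_zero.mp this
    tauto
  refine ⟨(h * h').re, hne, ?_⟩
  have h5 : h' = h⁻¹ * (h * h') := by rw [← mul_assoc, inv_mul_cancel₀ hh, one_mul]
  conv_lhs => rw [h5, key, Quaternion.mul_coe_eq_smul]
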